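/- Let H be a nonzero complex Hilbert space and let Z ⊆ B(H) be a complex linear subspace of the bounded operators on H which is closed under the adjoint A ↦ A* and satisfies that A² is a scalar multiple of the identity operator for every A ∈ Z. Then for all A, B ∈ Z there is a unique complex number ⟨A,B⟩ with A B* + B* A = 2⟨A,B⟩·id_H, and the map (A,B) ↦ ⟨A,B⟩ is a positive-definite hermitian inner product on Z: it is linear in A, satisfies ⟨B,A⟩ = conj(⟨A,B⟩), and ⟨A,A⟩ > 0 for every nonzero A ∈ Z. -/

import Mathlib

open scoped ComplexOrder

/-- on a star-closed subspace `Z ⊆ B(H)` all of whose elements have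
scalar squares, the relation `A B* + B* A = 2⟨A,B⟩·id` determines a unique scalar
`⟨A,B⟩` for all `A, B ∈ Z`, and `(A,B) ↦ ⟨A,B⟩` is a positive-definite hermitian
inner product on `Z`. -/
theorem spin_factor_canonical_inner_product
    {H : Type*} [NormedAddCommGroup H] [InnerProductSpace ℂ H] [CompleteSpace H]
    [Nontrivial H]
    (Z : Submodule ℂ (H →L[ℂ] H))
    (hstar : ∀ A ∈ Z, star A ∈ Z)
    (hsq : ∀ A ∈ Z, ∃ c : ℂ, A * A = c • (1 : H →L[ℂ] H)) :
    ∃ inn : Z → Z → ℂ,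
      (∀ A B : Z,
        (A : H →L[ℂ] H) * star (B : H →L[ℂ] H) + star (B : H →L[ℂ] H) * (A : H →L[ℂ] H)
          = (2 * inn A B) • (1 : H →L[ℂ] H)) ∧
      (∀ (A B : Z) (c : ℂ),
        (A : H →L[ℂ] H) * star (B : H →L[ℂ] H) + star (B : H →L[ℂ] H) * (A : H →L[ℂ] H)
          = (2 * c) • (1 : H →L[ℂ] H) → c = inn A B) ∧
      (∀ B : Z, IsLinearMap ℂ fun A : Z => inn A B) ∧
      (∀ A B : Z, inn B A = starRingEnd ℂ (inn A B)) ∧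
      (∀ A : Z, A ≠ 0 → 0 < inn A A) := by
  classical
  -- scalar multiples of the identity determine the scalar
  have hinj : ∀ c d : ℂ, c • (1 : H →L[ℂ] H) = d • (1 : H →L[ℂ] H) → c = d := by
    intro c d h
    obtain ⟨x, hx⟩ := exists_ne (0 : H)
    have := congrArg (fun T : H →L[ℂ] H => T x) h
    simp only [ContinuousLinearMap.smul_apply, ContinuousLinearMap.one_apply] at this
    exact smul_left_injective ℂ hx this
  -- existence of the scalar
  have hex : ∀ A B : Z, ∃ c : ℂ,
      (A : H →L[ℂ] H) * star (B : H →L[ℂ] H) + star (B : H →L[ℂ] H) * (A : H →L[ℂ] H)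
        = (2 * c) • (1 : H →L[ℂ] H) := by
    intro A B
    obtain ⟨c₁, h₁⟩ := hsq ((A : H →L[ℂ] H) + star (B : H →L[ℂ] H))
      (Z.add_mem A.2 (hstar _ B.2))
    obtain ⟨c₂, h₂⟩ := hsq (A : H →L[ℂ] H) A.2
    obtain ⟨c₃, h₃⟩ := hsq (star (B : H →L[ℂ] H)) (hstar _ B.2)
    refine ⟨(c₁ - c₂ - c₃) / 2, ?_⟩
    have hmul : (2 : ℂ) * ((c₁ - c₂ - c₃) / 2) = c₁ - c₂ - c₃ := by ring
    rw [hmul]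
    have hexp : ((A : H →L[ℂ] H) + star (B : H →L[ℂ] H)) *
        ((A : H →L[ℂ] H) + star (B : H →L[ℂ] H))
        = (A : H →L[ℂ] H) * (A : H →L[ℂ] H)
          + ((A : H →L[ℂ] H) * star (B : H →L[ℂ] H)
            + star (B : H →L[ℂ] H) * (A : H →L[ℂ] H))
          + star (B : H →L[ℂ] H) * star (B : H →L[ℂ] H) := by noncomm_ring
    have : (A : H →L[ℂ] H) * star (B : H →L[ℂ] H) + star (B : H →L[ℂ] H) * (A : H →L[ℂ] H)
        = c₁ • (1 : H →L[ℂ] H) - c₂ • (1 : H →L[ℂ] H) - c₃ • (1 : H →L[ℂ] H) := by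
      rw [← h₁, ← h₂, ← h₃, hexp]; abel
    rw [this, sub_smul, sub_smul]
  set inn : Z → Z → ℂ := fun A B => Classical.choose (hex A B) with hinn_def
  have hinn : ∀ A B : Z,
      (A : H →L[ℂ] H) * star (B : H →L[ℂ] H) + star (B : H →L[ℂ] H) * (A : H →L[ℂ] H)
        = (2 * inn A B) • (1 : H →L[ℂ] H) := fun A B => Classical.choose_spec (hex A B)
  have huniq : ∀ (A B : Z) (c : ℂ),
      (A : H →L[ℂ] H) * star (B : H →L[ℂ] H) + star (B : H →L[ℂ] H) * (A : H →L[ℂ] H)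
        = (2 * c) • (1 : H →L[ℂ] H) → c = inn A B := by
    intro A B c h
    have := hinj _ _ (h.symm.trans (hinn A B))
    have h2 : (2 : ℂ) ≠ 0 := two_ne_zero
    exact mul_left_cancel₀ h2 this
  refine ⟨inn, hinn, huniq, ?_, ?_, ?_⟩
  · -- linearity in the first argument
    intro B
    constructor
    · intro A A'
      refine (huniq _ _ _ ?_).symm
      have hA := hinn A B
      have hA' := hinn A' B
      push_cast
      calc ((A : H →L[ℂ] H) + (A' : H →L[ℂ] H)) * star (B : H →L[ℂ] H)
            + star (B : H →L[ℂ] H) * ((A : H →L[ℂ] H) + (A' : H →L[ℂ] H))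
          = ((A : H →L[ℂ] H) * star (B : H →L[ℂ] H) + star (B : H →L[ℂ] H) * (A : H →L[ℂ] H))
            + ((A' : H →L[ℂ] H) * star (B : H →L[ℂ] H)
              + star (B : H →L[ℂ] H) * (A' : H →L[ℂ] H)) := by noncomm_ring
        _ = (2 * inn A B) • (1 : H →L[ℂ] H) + (2 * inn A' B) • (1 : H →L[ℂ] H) := by
            rw [hA, hA']
        _ = (2 * (inn A B + inn A' B)) • (1 : H →L[ℂ] H) := by
            rw [← add_smul]; ring_nf
    · intro c A
      refine (huniq _ _ _ ?_).symm
      have hA := hinn A B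
      push_cast
      calc (c • (A : H →L[ℂ] H)) * star (B : H →L[ℂ] H)
            + star (B : H →L[ℂ] H) * (c • (A : H →L[ℂ] H))
          = c • ((A : H →L[ℂ] H) * star (B : H →L[ℂ] H)
              + star (B : H →L[ℂ] H) * (A : H →L[ℂ] H)) := by
            rw [smul_mul_assoc, mul_smul_comm, smul_add]
        _ = c • ((2 * inn A B) • (1 : H →L[ℂ] H)) := by rw [hA]
        _ = (2 * (c * inn A B)) • (1 : H →L[ℂ] H) := by
            rw [smul_smul]; ring_nf
  · -- hermitian symmetry
    intro A B
    refine (huniq B A _ ?_).symm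
    have h := congrArg star (hinn A B)
    simp only [star_add, star_mul, star_star, star_smul, star_one] at h
    rw [h]
    congr 1
    simp only [Complex.star_def, map_mul, map_ofNat]
    ring
  · -- positive definiteness
    intro A hA
    have hAne : (A : H →L[ℂ] H) ≠ 0 := fun h => hA (Subtype.ext h)
    obtain ⟨x, hx⟩ : ∃ x : H, (A : H →L[ℂ] H) x ≠ 0 := by
      by_contra h
      push_neg at h
      exact hAne (ContinuousLinearMap.ext fun x => by simpa using h x)
    have hxne : x ≠ 0 := fun h => hx (by simp [h])
    have h := congrArg (fun T : H →L[ℂ] H => T x) (hinn A A)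
    simp only [ContinuousLinearMap.add_apply, ContinuousLinearMap.mul_apply,
      ContinuousLinearMap.smul_apply, ContinuousLinearMap.one_apply,
      ContinuousLinearMap.star_eq_adjoint] at h
    have hin := congrArg (fun y => (inner ℂ x y : ℂ)) h
    simp only [inner_add_right, inner_smul_right] at hin
    have e1 : (inner ℂ x ((A : H →L[ℂ] H)
        ((ContinuousLinearMap.adjoint (A : H →L[ℂ] H)) x)) : ℂ)
        = ((‖(ContinuousLinearMap.adjoint (A : H →L[ℂ] H)) x‖ ^ 2 : ℝ) : ℂ) := by
      rw [← ContinuousLinearMap.adjoint_inner_left, inner_self_eq_norm_sq_to_K]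
      norm_cast
    have e2 : (inner ℂ x ((ContinuousLinearMap.adjoint (A : H →L[ℂ] H))
        ((A : H →L[ℂ] H) x)) : ℂ) = ((‖(A : H →L[ℂ] H) x‖ ^ 2 : ℝ) : ℂ) := by
      rw [ContinuousLinearMap.adjoint_inner_right, inner_self_eq_norm_sq_to_K]
      norm_cast
    have e3 : (inner ℂ x x : ℂ) = ((‖x‖ ^ 2 : ℝ) : ℂ) := by
      rw [inner_self_eq_norm_sq_to_K]; norm_cast
    rw [e1, e2, e3] at hin
    set s : ℝ := ‖(ContinuousLinearMap.adjoint (A : H →L[ℂ] H)) x‖ ^ 2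
      + ‖(A : H →L[ℂ] H) x‖ ^ 2 with hs
    have hspos : 0 < s := by
      have h1 : 0 < ‖(A : H →L[ℂ] H) x‖ ^ 2 := pow_pos (norm_pos_iff.mpr hx) 2
      have h2 : 0 ≤ ‖(ContinuousLinearMap.adjoint (A : H →L[ℂ] H)) x‖ ^ 2 := sq_nonneg _
      rw [hs]; linarith
    have htpos : 0 < ‖x‖ ^ 2 := pow_pos (norm_pos_iff.mpr hxne) 2
    have ht : ((‖x‖ ^ 2 : ℝ) : ℂ) ≠ 0 := by exact_mod_cast ne_of_gt htpos
    have hkey : (s : ℂ) = 2 * inn A A * ((‖x‖ ^ 2 : ℝ) : ℂ) := by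
      rw [hs]; push_cast; push_cast at hin; linear_combination hin
    have hc : inn A A = (s : ℂ) / (2 * ((‖x‖ ^ 2 : ℝ) : ℂ)) := by
      rw [eq_div_iff (mul_ne_zero two_ne_zero ht)]
      linear_combination -hkey
    have hc' : (s : ℂ) / (2 * ((‖x‖ ^ 2 : ℝ) : ℂ)) = ((s / (2 * ‖x‖ ^ 2) : ℝ) : ℂ) := by
      push_cast
      ring
    rw [hc, hc']
    exact Complex.zero_lt_real.mpr (div_pos hspos (by positivity))
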